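/- Let y : (0,a) → ℝ satisfy y''(r) = r·e^{y(r)}/y'(r) with y' > 0, y → +∞, y' → +∞ as r → a⁻, and e^{y}/y'^3 → 1/(3a). Then (y'(r)³ − 3r·e^{y(r)})/y'(r)² → −3/(2a) as r → a⁻. -/

import Mathlib

open Real Set Filter Topology

/-- L'Hôpital's rule, `∞/∞` form, at a left neighborhood in `ℝ`. -/
lemma lhopital_inf_left (a L : ℝ) (f g f' g' : ℝ → ℝ)
    (hf : ∀ᶠ x in 𝓝[<] a, HasDerivAt f (f' x) x)
    (hg : ∀ᶠ x in 𝓝[<] a, HasDerivAt g (g' x) x)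
    (hg' : ∀ᶠ x in 𝓝[<] a, 0 < g' x)
    (hgtop : Tendsto g (𝓝[<] a) atTop)
    (hratio : Tendsto (fun x => f' x / g' x) (𝓝[<] a) (𝓝 L)) :
    Tendsto (fun x => f x / g x) (𝓝[<] a) (𝓝 L) := by
  rw [Metric.tendsto_nhds]
  intro ε hε
  set δ : ℝ := min 1 (ε / (4 * (|L| + 1))) with hδdef
  have hL1 : (0:ℝ) < |L| + 1 := by positivity
  have hδpos : 0 < δ := lt_min one_pos (by positivity)
  have hδ1 : δ ≤ 1 := min_le_left _ _
  have hδ2 : δ ≤ ε / (4 * (|L| + 1)) := min_le_right _ _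
  have hε4 : (0:ℝ) < ε / 4 := by positivity
  have hr : ∀ᶠ x in 𝓝[<] a, |f' x / g' x - L| < ε / 4 := by
    have := Metric.tendsto_nhds.1 hratio (ε / 4) hε4
    simpa [Real.dist_eq] using this
  have hE := hf.and (hg.and (hg'.and hr))
  obtain ⟨c, hca, hsub⟩ := (nhdsLT_basis a).eventually_iff.1 hE
  set c' : ℝ := (c + a) / 2 with hc'def
  have hcc' : c < c' := by simp only [hc'def]; linarith
  have hc'a : c' < a := by simp only [hc'def]; linarith
  -- for x ∈ Ioo c' a : continuity of f, g on Icc c' x and the MVT bound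
  have key : ∀ x ∈ Ioo c' a, 0 < g x - g c' ∧
      |(f x - f c') / (g x - g c') - L| < ε / 4 := by
    intro x hx
    have hc'x : c' < x := hx.1
    have hmem : ∀ z ∈ Icc c' x, z ∈ Ioo c a :=
      fun z hz => ⟨lt_of_lt_of_le hcc' hz.1, lt_of_le_of_lt hz.2 hx.2⟩
    have hcontf : ContinuousOn f (Icc c' x) :=
      fun z hz => ((hsub (hmem z hz)).1).continuousAt.continuousWithinAt
    have hcontg : ContinuousOn g (Icc c' x) :=
      fun z hz => ((hsub (hmem z hz)).2.1).continuousAt.continuousWithinAt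
    have hmem' : ∀ z ∈ Ioo c' x, z ∈ Ioo c a :=
      fun z hz => ⟨hcc'.trans hz.1, hz.2.trans hx.2⟩
    have hdg : ∀ z ∈ Ioo c' x, HasDerivAt g (g' z) z :=
      fun z hz => (hsub (hmem' z hz)).2.1
    have hdf : ∀ z ∈ Ioo c' x, HasDerivAt f (f' z) z :=
      fun z hz => (hsub (hmem' z hz)).1
    -- g x - g c' > 0
    obtain ⟨t, ht, hslope⟩ := exists_hasDerivAt_eq_slope g g' hc'x hcontg hdg
    have hgt : 0 < g' t := (hsub (hmem' t ht)).2.2.1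
    have hpos : 0 < g x - g c' := by
      have hxc' : 0 < x - c' := by linarith
      have := hslope
      have : g x - g c' = g' t * (x - c') := by
        field_simp at this ⊢; linarith [this]
      rw [this]; positivity
    refine ⟨hpos, ?_⟩
    obtain ⟨t₂, ht₂, heq⟩ :=
      exists_ratio_hasDerivAt_eq_ratio_slope f f' hc'x hcontf hdf g g' hcontg hdg
    have hgt₂ : 0 < g' t₂ := (hsub (hmem' t₂ ht₂)).2.2.1
    have hq : (f x - f c') / (g x - g c') = f' t₂ / g' t₂ := by
      field_simp
      linarith [heq]
    rw [hq]
    exact (hsub (hmem' t₂ ht₂)).2.2.2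
  -- eventual smallness of the correction terms
  have h1 : Tendsto (fun x => g c' / g x) (𝓝[<] a) (𝓝 0) :=
    tendsto_const_nhds.div_atTop hgtop
  have h2 : Tendsto (fun x => f c' / g x) (𝓝[<] a) (𝓝 0) :=
    tendsto_const_nhds.div_atTop hgtop
  have e1 : ∀ᶠ x in 𝓝[<] a, |g c' / g x| < δ := by
    filter_upwards [Metric.tendsto_nhds.1 h1 δ hδpos] with x hx
    rwa [Real.dist_eq, sub_zero] at hx
  have e2 : ∀ᶠ x in 𝓝[<] a, |f c' / g x| < δ := by
    filter_upwards [Metric.tendsto_nhds.1 h2 δ hδpos] with x hx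
    rwa [Real.dist_eq, sub_zero] at hx
  have e3 : ∀ᶠ x in 𝓝[<] a, 0 < g x := hgtop.eventually_gt_atTop 0
  have e4 : ∀ᶠ x in 𝓝[<] a, x ∈ Ioo c' a :=
    eventually_of_mem (Ioo_mem_nhdsLT_of_mem ⟨hc'a, le_refl a⟩) (fun x hx => hx)
  filter_upwards [e1, e2, e3, e4] with x h1x h2x h3x h4x
  obtain ⟨hpos, hqlt⟩ := key x h4x
  rw [Real.dist_eq]
  set q : ℝ := (f x - f c') / (g x - g c') with hqdef
  have hgx : g x ≠ 0 := ne_of_gt h3x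
  have hgg : g x - g c' ≠ 0 := ne_of_gt hpos
  have hdecomp : f x / g x - L
      = (q - L) * ((g x - g c') / g x) + L * ((g x - g c') / g x - 1) + f c' / g x := by
    simp only [hqdef]
    field_simp
    ring
  have hfrac1 : |(g x - g c') / g x| ≤ 1 + δ := by
    have : (g x - g c') / g x = 1 - g c' / g x := by field_simp
    rw [this]
    calc |1 - g c' / g x| ≤ |(1:ℝ)| + |g c' / g x| := abs_sub _ _
      _ ≤ 1 + δ := by rw [abs_one]; linarith [h1x]
  have hfrac2 : |(g x - g c') / g x - 1| < δ := by
    have : (g x - g c') / g x - 1 = -(g c' / g x) := by field_simp; ring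
    rw [this, abs_neg]; exact h1x
  have habs : |f x / g x - L|
      ≤ |q - L| * |(g x - g c') / g x| + |L| * |(g x - g c') / g x - 1| + |f c' / g x| := by
    rw [hdecomp]
    refine (abs_add_le _ _).trans ?_
    gcongr
    refine (abs_add_le _ _).trans ?_
    simp [abs_mul, le_refl]
  have b1 : |q - L| * |(g x - g c') / g x| ≤ (ε / 4) * 2 :=
    mul_le_mul hqlt.le (hfrac1.trans (by linarith)) (abs_nonneg _) hε4.le
  have b2 : |L| * |(g x - g c') / g x - 1| ≤ |L| * δ :=
    mul_le_mul_of_nonneg_left hfrac2.le (abs_nonneg L)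
  have hLδ : |L| * δ + δ ≤ ε / 4 := by
    calc |L| * δ + δ = (|L| + 1) * δ := by ring
      _ ≤ (|L| + 1) * (ε / (4 * (|L| + 1))) := by gcongr
      _ = ε / 4 := by field_simp
  linarith

theorem calabi_ratio_limit
    (a : ℝ) (ha : 0 < a) (y y' y'' : ℝ → ℝ)
    (hy' : ∀ r ∈ Ioo (0:ℝ) a, HasDerivAt y (y' r) r)
    (hy'' : ∀ r ∈ Ioo (0:ℝ) a, HasDerivAt y' (y'' r) r)
    (hy'pos : ∀ r ∈ Ioo (0:ℝ) a, 0 < y' r)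
    (hode : ∀ r ∈ Ioo (0:ℝ) a, y'' r = r * Real.exp (y r) / y' r)
    (hy_top : Tendsto y (𝓝[<] a) atTop)
    (hy'_top : Tendsto y' (𝓝[<] a) atTop)
    (hlim : Tendsto (fun r => Real.exp (y r) / (y' r) ^ 3) (𝓝[<] a) (𝓝 (1 / (3 * a)))) :
    Tendsto (fun r => ((y' r) ^ 3 - 3 * r * Real.exp (y r)) / (y' r) ^ 2)
      (𝓝[<] a) (𝓝 (-3 / (2 * a))) := by
  have hIoo : Ioo (0:ℝ) a ∈ 𝓝[<] a := Ioo_mem_nhdsLT_of_mem ⟨ha, le_refl a⟩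
  apply lhopital_inf_left a (-3 / (2 * a))
    (fun r => (y' r) ^ 3 - 3 * r * Real.exp (y r)) (fun r => (y' r) ^ 2)
    (fun r => -3 * Real.exp (y r)) (fun r => 2 * r * Real.exp (y r))
  · filter_upwards [hIoo] with r hr
    have hy'ne : y' r ≠ 0 := ne_of_gt (hy'pos r hr)
    have h1 : HasDerivAt (fun x => (y' x) ^ 3) (3 * (y' r) ^ 2 * y'' r) r := by
      simpa using (hy'' r hr).fun_pow 3
    have h2 : HasDerivAt (fun x => 3 * x * Real.exp (y x))
        (3 * Real.exp (y r) + 3 * r * (Real.exp (y r) * y' r)) r := by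
      have := (((hasDerivAt_id r).const_mul (3:ℝ)).fun_mul ((hy' r hr).exp))
      refine this.congr_deriv ?_
      simp only [id_eq]
      ring
    have := h1.fun_sub h2
    refine this.congr_deriv ?_
    rw [hode r hr]
    field_simp
    ring
  · filter_upwards [hIoo] with r hr
    have hy'ne : y' r ≠ 0 := ne_of_gt (hy'pos r hr)
    have h1 : HasDerivAt (fun x => (y' x) ^ 2) (2 * y' r * y'' r) r := by
      simpa using (hy'' r hr).fun_pow 2
    convert h1 using 1
    rw [hode r hr]
    field_simp
  · filter_upwards [hIoo] with r hr
    have := Real.exp_pos (y r)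
    have := hr.1
    positivity
  · have : Tendsto (fun x : ℝ => x ^ 2) atTop atTop := tendsto_pow_atTop two_ne_zero
    exact this.comp hy'_top
  · have hmain : Tendsto (fun r : ℝ => -3 / (2 * r)) (𝓝[<] a) (𝓝 (-3 / (2 * a))) := by
      apply tendsto_nhdsWithin_of_tendsto_nhds
      apply Tendsto.div tendsto_const_nhds
      · exact (tendsto_id.const_mul 2)
      · positivity
    refine hmain.congr' ?_
    filter_upwards [hIoo] with r hr
    have hrne : r ≠ 0 := ne_of_gt hr.1
    have hexp : Real.exp (y r) ≠ 0 := (Real.exp_pos _).ne'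
    field_simp
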